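/- Let A be a normal subgroup of a finite group G such that A has a π-Hall subgroup, G/A has a π-Hall subgroup, and some π-Hall subgroup H of A satisfies H^A = H^G. Then G has a π-Hall subgroup. -/

import Mathlib

def IsPiNumber (π : Set ℕ) (n : ℕ) : Prop := ∀ p : ℕ, p.Prime → p ∣ n → p ∈ π

def IsHallSubgroup {G : Type*} [Group G] (π : Set ℕ) (H : Subgroup G) : Prop :=
  IsPiNumber π (Nat.card H) ∧ ∀ p : ℕ, p.Prime → p ∣ H.index → p ∉ π

def conjSub {G : Type*} [Group G] (g : G) (H : Subgroup G) : Subgroup G :=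
  H.map (MulAut.conj g).toMonoidHom

lemma isPiNumber_mul {π : Set ℕ} {m n : ℕ} (hm : IsPiNumber π m) (hn : IsPiNumber π n) :
    IsPiNumber π (m * n) := fun p hp hpd =>
  ((Nat.Prime.dvd_mul hp).mp hpd).elim (hm p hp) (hn p hp)

lemma conjSub_conjSub {G : Type*} [Group G] (x y : G) (H : Subgroup G) :
    conjSub x (conjSub y H) = conjSub (x * y) H := by
  unfold conjSub
  rw [Subgroup.map_map]
  congr 1
  ext z
  simp [mul_assoc]

lemma conjSub_one {G : Type*} [Group G] (H : Subgroup G) : conjSub 1 H = H := by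
  unfold conjSub
  ext z
  simp

lemma mem_normalizer_of_conjSub_eq {G : Type*} [Group G] {x : G} {H : Subgroup G}
    (h : conjSub x H = H) : x ∈ Subgroup.normalizer (H : Set G) := by
  rw [Subgroup.mem_normalizer_iff]
  intro g
  constructor
  · intro hg
    have : x * g * x⁻¹ ∈ conjSub x H := ⟨g, hg, by simp [mul_assoc]⟩
    rwa [h] at this
  · intro hg
    rw [← h] at hg
    obtain ⟨g', hg', hEq⟩ := hg
    simp only [MulEquiv.coe_toMonoidHom, MulAut.conj_apply] at hEq
    have : g' = g := by
      have := mul_left_cancel ((mul_right_cancel hEq))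
      exact this
    rwa [← this]

/-- If `f : G →* H` and `ker f ≤ K`, then `|K.map f| * |ker f| = |K|`. -/
lemma card_map_mul_card_ker {G H : Type*} [Group G] [Group H] [Finite G]
    (f : G →* H) (K : Subgroup G) (h : f.ker ≤ K) :
    Nat.card (K.map f) * Nat.card f.ker = Nat.card K := by
  set g := f.comp K.subtype with hg
  have h1 : g.range = K.map f := by
    rw [hg, MonoidHom.range_comp, Subgroup.range_subtype]
  have h2 : g.ker = f.ker.subgroupOf K := (MonoidHom.comap_ker f K.subtype).symm
  have h3 : Nat.card g.ker = Nat.card f.ker := by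
    rw [h2]
    exact Nat.card_congr (Subgroup.subgroupOfEquivOfLe h).toEquiv
  have h4 : Nat.card g.range = g.ker.index := by
    rw [Subgroup.index_eq_card]
    exact Nat.card_congr (QuotientGroup.quotientKerEquivRange g).toEquiv.symm
  have h5 := Subgroup.card_mul_index g.ker
  rw [← h1, h4, h3] at *
  rw [h4, mul_comm, ← h3]
  exact h5

/-- If `A ⊴ G`, `A` has a `π`-Hall subgroup, `G/A` has a `π`-Hall subgroup, and some
`π`-Hall subgroup `H` of `A` satisfies `H^A = H^G`, then `G` has a `π`-Hall subgroup. -/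
theorem Epi_of_normal {G : Type*} [Group G] [Finite G] (π : Set ℕ)
    (A : Subgroup G) [A.Normal]
    (hA : ∃ K : Subgroup A, IsHallSubgroup π K)
    (hquot : ∃ K : Subgroup (G ⧸ A), IsHallSubgroup π K)
    (hinv : ∃ H : Subgroup G, H ≤ A ∧ IsHallSubgroup π (H.subgroupOf A) ∧
      {K : Subgroup G | ∃ a ∈ A, K = conjSub a⁻¹ H} =
        {K : Subgroup G | ∃ g : G, K = conjSub g⁻¹ H}) :
    ∃ H : Subgroup G, IsHallSubgroup π H := by
  clear hA
  obtain ⟨H, hHA, ⟨hHcard, hHidx⟩, hconj⟩ := hinv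
  obtain ⟨Kb, hKbcard, hKbidx⟩ := hquot
  set φ := QuotientGroup.mk' A with hφdef
  have φsurj : Function.Surjective φ := QuotientGroup.mk'_surjective A
  have hφker : φ.ker = A := QuotientGroup.ker_mk' A
  set S : Subgroup G := Kb.comap φ with hSdef
  have hAS : A ≤ S := by
    intro a ha
    have : φ a = 1 := by
      rw [hφdef, QuotientGroup.mk'_apply, QuotientGroup.eq_one_iff]; exact ha
    simpa [hSdef, Subgroup.mem_comap, this] using Kb.one_mem
  set T : Subgroup G := Subgroup.normalizer (H : Set G) ⊓ S with hTdef
  have hHT : H ≤ T := le_inf Subgroup.le_normalizer (hHA.trans hAS)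
  set D : Subgroup G := A ⊓ T with hDdef
  have hHD : H ≤ D := le_inf hHA hHT
  -- Frattini argument
  have frattini : ∀ s ∈ S, ∃ t ∈ T, ∃ a ∈ A, s = t * a := by
    intro s hs
    have hmem : conjSub s⁻¹ H ∈ {K : Subgroup G | ∃ g : G, K = conjSub g⁻¹ H} := ⟨s, rfl⟩
    rw [← hconj] at hmem
    obtain ⟨a, ha, hEq⟩ := hmem
    refine ⟨s * a⁻¹, ⟨?_, S.mul_mem hs (S.inv_mem (hAS ha))⟩, a, ha, by group⟩
    apply mem_normalizer_of_conjSub_eq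
    calc conjSub (s * a⁻¹) H = conjSub s (conjSub a⁻¹ H) := (conjSub_conjSub _ _ _).symm
      _ = conjSub s (conjSub s⁻¹ H) := by rw [← hEq]
      _ = conjSub (s * s⁻¹) H := conjSub_conjSub _ _ _
      _ = H := by rw [mul_inv_cancel, conjSub_one]
  -- image of S and T in G/A
  have hSmap : S.map φ = Kb := Subgroup.map_comap_eq_self_of_surjective φsurj Kb
  have hTmap : T.map φ = Kb := by
    apply le_antisymm
    · rw [← hSmap]; exact Subgroup.map_mono inf_le_right
    · intro k hk
      rw [← hSmap] at hk
      obtain ⟨s, hs, rfl⟩ := hk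
      obtain ⟨t, ht, a, ha, rfl⟩ := frattini s hs
      refine ⟨t, ht, ?_⟩
      have ha1 : φ a = 1 := by
        rw [hφdef, QuotientGroup.mk'_apply, QuotientGroup.eq_one_iff]; exact ha
      rw [map_mul, ha1, mul_one]
  -- cardinal bookkeeping
  have hposH : 0 < Nat.card H := Nat.card_pos
  have hcardHA : Nat.card (H.subgroupOf A) = Nat.card H :=
    Nat.card_congr (Subgroup.subgroupOfEquivOfLe hHA).toEquiv
  have hcardA : Nat.card H * (H.subgroupOf A).index = Nat.card A := by
    rw [← hcardHA]; exact Subgroup.card_mul_index _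
  have hidxA : A.index = Nat.card Kb * Kb.index := by
    rw [Subgroup.index_eq_card A]
    exact (Subgroup.card_mul_index Kb).symm
  have hcardG : Nat.card G
      = Nat.card H * (H.subgroupOf A).index * (Nat.card Kb * Kb.index) := by
    rw [← Subgroup.card_mul_index A, hcardA, hidxA]
  -- |T| = |D| * |Kb|
  set ψ : T →* G ⧸ A := φ.comp T.subtype with hψdef
  have hψker : ψ.ker = A.subgroupOf T := by
    rw [hψdef, ← MonoidHom.comap_ker, hφker]; rfl
  have hψrange : ψ.range = Kb := by
    rw [hψdef, MonoidHom.range_comp, Subgroup.range_subtype, hTmap]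
  have hcardkerψ : Nat.card ψ.ker = Nat.card D := by
    rw [hψker]
    have h0 : A.subgroupOf T = D.subgroupOf T := (Subgroup.inf_subgroupOf_right A T).symm
    rw [h0]
    exact Nat.card_congr
      (Subgroup.subgroupOfEquivOfLe (show D ≤ T from inf_le_right)).toEquiv
  have hcardT : Nat.card T = Nat.card D * Nat.card Kb := by
    have h1 : Nat.card ψ.ker * ψ.ker.index = Nat.card T := Subgroup.card_mul_index ψ.ker
    have h2 : ψ.ker.index = Nat.card Kb := by
      rw [Subgroup.index_eq_card, ← hψrange]
      exact Nat.card_congr (QuotientGroup.quotientKerEquivRange ψ).toEquiv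
    rw [← h1, h2, hcardkerψ]
  -- dH := |D| / |H|
  have hHdvdD : Nat.card H ∣ Nat.card D := Subgroup.card_dvd_of_le hHD
  set dH : ℕ := Nat.card D / Nat.card H with hdHdef
  have hcardD : Nat.card D = Nat.card H * dH := (Nat.mul_div_cancel' hHdvdD).symm
  have hdHdvd : dH ∣ (H.subgroupOf A).index := by
    have hdvd : Nat.card D ∣ Nat.card A := Subgroup.card_dvd_of_le inf_le_left
    rw [hcardD, ← hcardA] at hdvd
    exact (Nat.mul_dvd_mul_iff_left hposH).mp hdvd
  -- set up quotient T / (H.subgroupOf T)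
  set H' : Subgroup T := H.subgroupOf T with hH'def
  have hcardH' : Nat.card H' = Nat.card H :=
    Nat.card_congr (Subgroup.subgroupOfEquivOfLe hHT).toEquiv
  have hH'normal : H'.Normal := by
    constructor
    intro n hn g
    have hg : (g : G) ∈ Subgroup.normalizer (H : Set G) := (Subgroup.mem_inf.mp g.2).1
    simp only [hH'def, Subgroup.mem_subgroupOf] at hn ⊢
    push_cast
    exact (Subgroup.mem_normalizer_iff.mp hg _).mp hn
  set ρ : T →* T ⧸ H' := QuotientGroup.mk' H' with hρdef
  have hρker : ρ.ker = H' := QuotientGroup.ker_mk' H'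
  have hρsurj : Function.Surjective ρ := QuotientGroup.mk'_surjective H'
  have hcardQ : Nat.card (T ⧸ H') = dH * Nat.card Kb := by
    have h1 : Nat.card H' * H'.index = Nat.card T := Subgroup.card_mul_index H'
    rw [hcardH', hcardT, hcardD, mul_assoc] at h1
    have h2 := Nat.eq_of_mul_eq_mul_left hposH h1.symm
    rw [← Subgroup.index_eq_card, ← h2]
  -- N' := image of A ⊓ T in T ⧸ H'
  have hAsubnormal : (A.subgroupOf T).Normal := Subgroup.normal_subgroupOf
  set N' : Subgroup (T ⧸ H') := (A.subgroupOf T).map ρ with hN'def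
  have hN'normal : N'.Normal := Subgroup.Normal.map hAsubnormal ρ hρsurj
  have hkerleA : ρ.ker ≤ A.subgroupOf T := by
    rw [hρker, hH'def]
    exact Subgroup.comap_mono hHA
  have hcardN'mul : Nat.card N' * Nat.card ρ.ker = Nat.card (A.subgroupOf T) :=
    card_map_mul_card_ker ρ (A.subgroupOf T) hkerleA
  have hcardAT : Nat.card (A.subgroupOf T) = Nat.card D := by
    have h0 : A.subgroupOf T = D.subgroupOf T := (Subgroup.inf_subgroupOf_right A T).symm
    rw [h0]
    exact Nat.card_congr
      (Subgroup.subgroupOfEquivOfLe (show D ≤ T from inf_le_right)).toEquiv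
  have hcardN' : Nat.card N' = dH := by
    rw [hcardAT, hρker, hcardH', hcardD, mul_comm (Nat.card H) dH] at hcardN'mul
    exact Nat.eq_of_mul_eq_mul_right hposH hcardN'mul
  have hposdH : 0 < dH := by
    rw [← hcardN']; exact Nat.card_pos
  have hidxN' : N'.index = Nat.card Kb := by
    have h1 : Nat.card N' * N'.index = Nat.card (T ⧸ H') := Subgroup.card_mul_index N'
    rw [hcardN', hcardQ] at h1
    exact Nat.eq_of_mul_eq_mul_left hposdH h1
  -- coprimality and Schur-Zassenhaus
  have hcop : Nat.Coprime (Nat.card N') N'.index := by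
    rw [hcardN', hidxN']
    by_contra hc
    obtain ⟨p, hp, hp1, hp2⟩ := Nat.Prime.not_coprime_iff_dvd.mp hc
    exact hHidx p hp (hp1.trans hdHdvd) (hKbcard p hp hp2)
  obtain ⟨C, hC⟩ := Subgroup.exists_right_complement'_of_coprime hcop
  have hcardC : Nat.card C = Nat.card Kb := by
    have h1 := hC.card_mul
    rw [hcardN', hcardQ] at h1
    exact Nat.eq_of_mul_eq_mul_left hposdH h1
  -- pull back C to T, then to G
  set E₀ : Subgroup T := C.comap ρ with hE₀def
  have hkerleE₀ : ρ.ker ≤ E₀ := by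
    rw [hE₀def]
    intro x hx
    simp only [Subgroup.mem_comap]
    have : ρ x = 1 := hx
    rw [this]; exact C.one_mem
  have hE₀map : E₀.map ρ = C := Subgroup.map_comap_eq_self_of_surjective hρsurj C
  have hcardE₀ : Nat.card E₀ = Nat.card Kb * Nat.card H := by
    have := card_map_mul_card_ker ρ E₀ hkerleE₀
    rw [hE₀map, hρker, hcardH', hcardC] at this
    exact this.symm
  set E : Subgroup G := E₀.map T.subtype with hEdef
  have hcardE : Nat.card E = Nat.card H * Nat.card Kb := by
    have : Nat.card E = Nat.card E₀ :=
      (Nat.card_congr (Subgroup.equivMapOfInjective E₀ T.subtype T.subtype_injective).toEquiv).symm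
    rw [this, hcardE₀, mul_comm]
  refine ⟨E, ?_, ?_⟩
  · rw [hcardE]
    refine isPiNumber_mul ?_ hKbcard
    rwa [← hcardHA]
  · have h1 : Nat.card E * E.index = Nat.card G := Subgroup.card_mul_index E
    rw [hcardE, hcardG] at h1
    have h2 : Nat.card H * (H.subgroupOf A).index * (Nat.card Kb * Kb.index)
        = Nat.card H * Nat.card Kb * ((H.subgroupOf A).index * Kb.index) := by ring
    rw [h2] at h1
    have hpos : 0 < Nat.card H * Nat.card Kb := Nat.mul_pos hposH Nat.card_pos
    have h3 : E.index = (H.subgroupOf A).index * Kb.index :=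
      Nat.eq_of_mul_eq_mul_left hpos h1
    rw [h3]
    intro p hp hpd hpπ
    rcases (Nat.Prime.dvd_mul hp).mp hpd with h | h
    · exact hHidx p hp h hpπ
    · exact hKbidx p hp h hpπ
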